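/- Let F : ℝ³ → ℝ³ be the gradient field of the Laplace Green's function, F(x) = (4π)⁻¹ · ‖x‖⁻³ • x, on ℝ³ = EuclideanSpace ℝ (Fin 3). Fix y ∈ ℝ³ and let x ≠ 0. Then the map x ↦ (fderiv ℝ F x) y is differentiable at x, and for all z ∈ ℝ³ its derivative applied to z equals (4π)⁻¹ • ( −3‖x‖⁻⁵ • ( ⟪y,z⟫ • x + ⟪x,z⟫ • y + ⟪x,y⟫ • z ) + (15 · ⟪x,y⟫ · ⟪x,z⟫ · ‖x‖⁻⁷) • x ). (This is the third derivative tensor ∇³G(x) = [−3 Σᵢ (x⊗eᵢ⊗eᵢ + eᵢ⊗x⊗eᵢ + eᵢ⊗eᵢ⊗x)]/(4π‖x‖⁵) + 15 x⊗x⊗x/(4π‖x‖⁷).) -/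

import Mathlib

open scoped RealInnerProductSpace

variable {E : Type*} [NormedAddCommGroup E] [InnerProductSpace ℝ E]

lemma hasFDerivAt_norm' (x : E) (hx : x ≠ 0) :
    HasFDerivAt (fun w : E => ‖w‖) (‖x‖⁻¹ • innerSL ℝ x) x := by
  have hn : ‖x‖ ≠ 0 := norm_ne_zero_iff.mpr hx
  have h2 : HasFDerivAt (fun w : E => Real.sqrt (‖w‖ ^ 2))
      ((1 / (2 * Real.sqrt (‖x‖ ^ 2))) • (2 • (innerSL ℝ x : E →L[ℝ] ℝ))) x :=
    (hasStrictFDerivAt_norm_sq x).hasFDerivAt.sqrt (pow_ne_zero _ hn)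
  have hs : (fun w : E => Real.sqrt (‖w‖ ^ 2)) = fun w : E => ‖w‖ := by
    funext w; rw [Real.sqrt_sq (norm_nonneg w)]
  rw [hs] at h2
  convert h2 using 1
  rw [Real.sqrt_sq (norm_nonneg x)]
  ext v
  simp
  ring

lemma hasFDerivAt_norm_pow_inv (k : ℕ) (x : E) (hx : x ≠ 0) :
    HasFDerivAt (fun w : E => (‖w‖ ^ k)⁻¹)
      ((-(k : ℝ) * (‖x‖ ^ (k + 2))⁻¹) • innerSL ℝ x) x := by
  have hn : ‖x‖ ≠ 0 := norm_ne_zero_iff.mpr hx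
  have h1 : HasFDerivAt (fun w : E => ‖w‖ ^ k)
      (((k : ℝ) * ‖x‖ ^ (k - 1)) • (‖x‖⁻¹ • innerSL ℝ x)) x := by
    have := (hasDerivAt_pow k ‖x‖).comp_hasFDerivAt x (hasFDerivAt_norm' x hx)
    exact this
  have h2 := (hasDerivAt_inv (pow_ne_zero k hn)).comp_hasFDerivAt x h1
  refine h2.congr_fderiv ?_
  symm
  rw [smul_smul, smul_smul]
  congr 1
  rcases Nat.eq_zero_or_pos k with hk | hk
  · subst hk; simp
  · have key : ‖x‖ ^ (k + 2) * ‖x‖ ^ (k - 1) = (‖x‖ ^ k) ^ 2 * ‖x‖ := by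
      rw [← pow_mul, ← pow_add, ← pow_succ]; congr 1; omega
    obtain ⟨m, rfl⟩ : ∃ m, k = m + 1 := ⟨k - 1, by omega⟩
    simp only [Nat.add_sub_cancel]
    field_simp
    ring

/-- Derivative of the field `F` at `w ≠ 0`. -/
lemma hasFDerivAt_F (c : ℝ) (w : E) (hw : w ≠ 0) :
    HasFDerivAt (fun v : E => (c * (‖v‖ ^ 3)⁻¹) • v)
      ((c * (‖w‖ ^ 3)⁻¹) • ContinuousLinearMap.id ℝ E +
        ((c * (-3 * (‖w‖ ^ 5)⁻¹)) • innerSL ℝ w).smulRight w) w := by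
  have hc : HasFDerivAt (fun v : E => c * (‖v‖ ^ 3)⁻¹)
      (c • ((-(3:ℕ) * (‖w‖ ^ (3 + 2))⁻¹) • innerSL ℝ w)) w :=
    (hasFDerivAt_norm_pow_inv 3 w hw).const_mul c
  have := hc.smul (hasFDerivAt_id w)
  refine this.congr_fderiv ?_
  ext v
  simp
  ring_nf

/-- **Third derivative (quadrupole kernel) of the Laplace Green's function.** For the
gradient field `F x = (4π)⁻¹ * ‖x‖⁻³ • x` of the Laplace Green's function on `ℝ³`,
a fixed `y`, and `x ≠ 0`, the map `x ↦ (fderiv ℝ F x) y` is differentiable at `x`, and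
its derivative applied to `z` equals
`(4π)⁻¹ • (−3‖x‖⁻⁵ • (⟪y,z⟫ • x + ⟪x,z⟫ • y + ⟪x,y⟫ • z) + (15 ⟪x,y⟫ ⟪x,z⟫ ‖x‖⁻⁷) • x)`. -/
theorem stmt_10 (F : EuclideanSpace ℝ (Fin 3) → EuclideanSpace ℝ (Fin 3))
    (hF : ∀ x, F x = ((4 * Real.pi)⁻¹ * (‖x‖ ^ 3)⁻¹) • x)
    (y : EuclideanSpace ℝ (Fin 3))
    (x : EuclideanSpace ℝ (Fin 3)) (hx : x ≠ 0) :
    DifferentiableAt ℝ (fun w => (fderiv ℝ F w) y) x ∧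
    ∀ z : EuclideanSpace ℝ (Fin 3),
      (fderiv ℝ (fun w => (fderiv ℝ F w) y) x) z =
        (4 * Real.pi)⁻¹ •
          ((-3 * (‖x‖ ^ 5)⁻¹) •
              ((inner ℝ y z : ℝ) • x + (inner ℝ x z : ℝ) • y + (inner ℝ x y : ℝ) • z) +
            (15 * (inner ℝ x y : ℝ) * (inner ℝ x z : ℝ) * (‖x‖ ^ 7)⁻¹) • x) := by
  set c : ℝ := (4 * Real.pi)⁻¹ with hc
  have hFeq : F = fun v => (c * (‖v‖ ^ 3)⁻¹) • v := funext hF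
  -- the explicit first-derivative-applied-to-y function
  set g : EuclideanSpace ℝ (Fin 3) → EuclideanSpace ℝ (Fin 3) :=
    fun w => (c * (-3 * (‖w‖ ^ 5)⁻¹) * ((inner ℝ w y : ℝ))) • w + (c * (‖w‖ ^ 3)⁻¹) • y with hg
  have hfd : ∀ w : EuclideanSpace ℝ (Fin 3), w ≠ 0 → (fderiv ℝ F w) y = g w := by
    intro w hw
    rw [hFeq, (hasFDerivAt_F c w hw).fderiv]
    simp only [ContinuousLinearMap.add_apply, ContinuousLinearMap.coe_smul', Pi.smul_apply,
      ContinuousLinearMap.smulRight_apply, ContinuousLinearMap.id_apply, innerSL_apply_apply,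
      smul_eq_mul, hg]
    module
  -- eventual equality near x
  have hev : (fun w => (fderiv ℝ F w) y) =ᶠ[nhds x] g := by
    filter_upwards [IsOpen.mem_nhds isOpen_ne hx] with w hw using hfd w hw
  -- derivative of g at x
  have ha : HasFDerivAt (fun w : EuclideanSpace ℝ (Fin 3) => (‖w‖ ^ 5)⁻¹ * (inner ℝ w y : ℝ))
      (((‖x‖ ^ 5)⁻¹) • (innerSL ℝ y : _ →L[ℝ] ℝ) +
        ((inner ℝ x y : ℝ)) • ((-(5:ℕ) * (‖x‖ ^ (5 + 2))⁻¹) • innerSL ℝ x)) x := by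
    have hinner : HasFDerivAt (fun w : EuclideanSpace ℝ (Fin 3) => (inner ℝ w y : ℝ))
        (innerSL ℝ y : _ →L[ℝ] ℝ) x := by
      have := (innerSL ℝ y : EuclideanSpace ℝ (Fin 3) →L[ℝ] ℝ).hasFDerivAt (x := x)
      convert this using 2 with w
      · exact real_inner_comm _ _
    exact (hasFDerivAt_norm_pow_inv 5 x hx).mul hinner
  have hG : HasFDerivAt g
      (((c * -3 * ((‖x‖ ^ 5)⁻¹ * (inner ℝ x y : ℝ))) • (ContinuousLinearMap.id ℝ _) +
        ((c * -3) • (((‖x‖ ^ 5)⁻¹) • (innerSL ℝ y : _ →L[ℝ] ℝ) +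
          ((inner ℝ x y : ℝ)) • ((-(5:ℕ) * (‖x‖ ^ (5 + 2))⁻¹) • innerSL ℝ x))).smulRight x) +
        ((c • ((-(3:ℕ) * (‖x‖ ^ (3 + 2))⁻¹) • innerSL ℝ x)).smulRight y)) x := by
    have h1 := ((ha.const_mul (c * -3)).smul (hasFDerivAt_id x))
    have h2 := ((hasFDerivAt_norm_pow_inv 3 x hx).const_mul c).smul_const y
    have := h1.add h2
    refine (this.congr_fderiv ?_).congr_of_eventuallyEq (Filter.Eventually.of_forall fun w => ?_)
    · rfl
    · simp [hg]; ring_nf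
  refine ⟨hG.differentiableAt.congr_of_eventuallyEq hev, fun z => ?_⟩
  rw [hev.fderiv_eq, hG.fderiv]
  simp only [ContinuousLinearMap.add_apply, ContinuousLinearMap.coe_smul', Pi.smul_apply,
    ContinuousLinearMap.smulRight_apply, ContinuousLinearMap.id_apply, innerSL_apply_apply,
    smul_eq_mul]
  push_cast
  module
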